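/- (Proposition 2, concavity of the anchor-node utility) Assume a ≥ e and let g be the inverse of the transmit-power function Q(R) = A·R^k·a^R + Q₀ (A > 0, k ≥ 1, Q₀ ≥ 0). Let I ⊆ (Q₀, ∞) be an open interval on which g(q) > 2, let w₁, w₂ ∈ (0, 1) with w₁ + w₂ = 1, and let E_tl, C, n, d, n_arx, S, P_sum > 0. Define the follower (anchor node) utility U_F(q) = w₁·(E_tl − C·q)/E_tl + w₂·( (4π·n/(3d³))·(1/n_arx + 1/S)·g(q)³ − P_sum/q ) for q ∈ I. Then U_F is strictly concave on I; in particular its second derivative is strictly negative on I. -/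

import Mathlib

/-- The underwater acoustic transmit-power function Q(R) = A·R^k·a^R + Q₀. -/
noncomputable def Qfun (A a k Q₀ : ℝ) : ℝ → ℝ := fun R => A * R ^ k * a ^ R + Q₀

/-- The follower (anchor node) utility (Eq. (10)):
U_F(q) = w₁·(E_tl − C·q)/E_tl + w₂·( (4π·n/(3d³))·(1/n_arx + 1/S)·g(q)³ − P_sum/q ). -/
noncomputable def UF (w₁ w₂ Etl C n d narx S Psum : ℝ) (g : ℝ → ℝ) : ℝ → ℝ :=
  fun q => w₁ * (Etl - C * q) / Etl +
    w₂ * ((4 * Real.pi * n / (3 * d ^ 3)) * (1 / narx + 1 / S) * (g q) ^ 3 - Psum / q)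

set_option maxHeartbeats 2000000 in
/-- Proposition 2, concavity of the anchor-node utility: U_F is strictly
concave on I; in particular its second derivative is strictly negative on I. -/
theorem stmt_9 (A a k Q₀ : ℝ) (hA : 0 < A) (ha : Real.exp 1 ≤ a) (hk : 1 ≤ k) (hQ₀ : 0 ≤ Q₀)
    (g : ℝ → ℝ)
    (hginv : ∀ R : ℝ, 0 < R → g (Qfun A a k Q₀ R) = R)
    (hgQ : ∀ y : ℝ, Q₀ < y → Qfun A a k Q₀ (g y) = y)
    (hgmono : StrictMonoOn g (Set.Ioi Q₀))
    (hgpos : ∀ y : ℝ, Q₀ < y → 0 < g y)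
    (I : Set ℝ) (hIsub : I ⊆ Set.Ioi Q₀) (hIopen : IsOpen I) (hIconv : Convex ℝ I)
    (hg2 : ∀ q ∈ I, 2 < g q)
    (w₁ w₂ : ℝ) (hw₁ : w₁ ∈ Set.Ioo (0 : ℝ) 1) (hw₂ : w₂ ∈ Set.Ioo (0 : ℝ) 1)
    (hw : w₁ + w₂ = 1)
    (Etl C n d narx S Psum : ℝ) (hEtl : 0 < Etl) (hC : 0 < C) (hn : 0 < n) (hd : 0 < d)
    (hnarx : 0 < narx) (hS : 0 < S) (hPsum : 0 < Psum) :
    StrictConcaveOn ℝ I (UF w₁ w₂ Etl C n d narx S Psum g) ∧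
    ∀ q ∈ I, deriv (deriv (UF w₁ w₂ Etl C n d narx S Psum g)) q < 0 := by
  obtain ⟨hw₁0, -⟩ := hw₁
  obtain ⟨hw₂0, -⟩ := hw₂
  have ha0 : 0 < a := lt_of_lt_of_le (Real.exp_pos 1) ha
  have hL1 : 1 ≤ Real.log a := (Real.le_log_iff_exp_le ha0).2 ha
  -- abbreviations
  set K : ℝ := 4 * Real.pi * n / (3 * d ^ 3) * (1 / narx + 1 / S) with hKdef
  have hK : 0 < K := by
    have := Real.pi_pos
    rw [hKdef]; positivity
  set Qd : ℝ → ℝ := fun R => A * a ^ R * R ^ (k - 1) * (k + R * Real.log a) with hQddef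
  set Qdd : ℝ → ℝ := fun R =>
    A * (a ^ R * Real.log a) * R ^ (k - 1) * (k + R * Real.log a)
      + A * a ^ R * ((k - 1) * R ^ (k - 2)) * (k + R * Real.log a)
      + A * a ^ R * R ^ (k - 1) * Real.log a with hQdddef
  -- basic positivity
  have hQdpos : ∀ R : ℝ, 0 < R → 0 < Qd R := by
    intro R hR
    have hx : 0 < a ^ R := Real.rpow_pos_of_pos ha0 R
    have hu : 0 < R ^ (k - 1) := Real.rpow_pos_of_pos hR _
    have hB : 0 < k + R * Real.log a := by nlinarith
    rw [hQddef]
    exact mul_pos (mul_pos (mul_pos hA hx) hu) hB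
  have hQgt : ∀ R : ℝ, 0 < R → Q₀ < Qfun A a k Q₀ R := by
    intro R hR
    have hx : 0 < a ^ R := Real.rpow_pos_of_pos ha0 R
    have hu : 0 < R ^ k := Real.rpow_pos_of_pos hR _
    have : 0 < A * R ^ k * a ^ R := mul_pos (mul_pos hA hu) hx
    simp only [Qfun]; linarith
  -- derivative of Qfun
  have hQder : ∀ R : ℝ, 0 < R → HasDerivAt (Qfun A a k Q₀) (Qd R) R := by
    intro R hR
    have h1 : HasDerivAt (fun x : ℝ => x ^ k) (k * R ^ (k - 1)) R :=
      Real.hasDerivAt_rpow_const (Or.inl hR.ne')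
    have h2 : HasDerivAt (fun x : ℝ => a ^ x) (a ^ R * Real.log a) R :=
      (Real.hasStrictDerivAt_const_rpow ha0 R).hasDerivAt
    have h3 := ((h1.const_mul A).mul h2).add_const Q₀
    have hRk : R ^ k = R ^ (k - 1) * R := by
      rw [show k = (k - 1) + 1 by ring, Real.rpow_add_one hR.ne']
      ring_nf
    refine h3.congr_deriv ?_
    rw [hQddef, hRk]; ring
  -- strict monotonicity of Qfun on (0,∞)
  have hQmono : StrictMonoOn (Qfun A a k Q₀) (Set.Ioi 0) := by
    intro R₁ h₁ R₂ h₂ h12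
    simp only [Set.mem_Ioi] at h₁ h₂
    by_contra hcon
    push_neg at hcon
    rcases eq_or_lt_of_le hcon with heq | hlt
    · have e1 := hginv R₁ h₁
      have e2 := hginv R₂ h₂
      rw [heq] at e2
      rw [e2] at e1
      exact h12.ne' e1
    · have := hgmono (Set.mem_Ioi.2 (hQgt R₂ h₂)) (Set.mem_Ioi.2 (hQgt R₁ h₁)) hlt
      rw [hginv R₁ h₁, hginv R₂ h₂] at this
      exact absurd h12 (not_lt.2 this.le)
  -- continuity of g on (Q₀,∞)
  have hgcont : ∀ q ∈ Set.Ioi Q₀, ContinuousAt g q := by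
    intro q hq
    have hq' : Q₀ < q := hq
    have hR : 0 < g q := hgpos q hq'
    have hQgq : Qfun A a k Q₀ (g q) = q := hgQ q hq'
    rw [ContinuousAt, Metric.tendsto_nhds]
    intro ε hε
    set ε' : ℝ := min (ε / 2) (g q / 2) with hε'def
    have hε'pos : 0 < ε' := lt_min (by linarith) (by linarith)
    have hε'ε : ε' < ε := lt_of_le_of_lt (min_le_left _ _) (by linarith)
    have h1 : 0 < g q - ε' := by
      have := min_le_right (ε / 2) (g q / 2)
      rw [hε'def]; linarith [this]
    have h2 : 0 < g q + ε' := by linarith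
    have hlow : Qfun A a k Q₀ (g q - ε') < q := by
      have := hQmono (Set.mem_Ioi.2 h1) (Set.mem_Ioi.2 hR) (by linarith)
      rwa [hQgq] at this
    have hhigh : q < Qfun A a k Q₀ (g q + ε') := by
      have := hQmono (Set.mem_Ioi.2 hR) (Set.mem_Ioi.2 h2) (by linarith)
      rwa [hQgq] at this
    have hmem : Set.Ioo (Qfun A a k Q₀ (g q - ε')) (Qfun A a k Q₀ (g q + ε')) ∈ nhds q :=
      Ioo_mem_nhds hlow hhigh
    filter_upwards [hmem] with y hy
    have hyQ₀ : Q₀ < y := lt_trans (hQgt _ h1) hy.1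
    have hgylow : g q - ε' < g y := by
      have := hgmono (Set.mem_Ioi.2 (hQgt _ h1)) (Set.mem_Ioi.2 hyQ₀) hy.1
      rwa [hginv _ h1] at this
    have hgyhigh : g y < g q + ε' := by
      have := hgmono (Set.mem_Ioi.2 hyQ₀) (Set.mem_Ioi.2 (hQgt _ h2)) hy.2
      rwa [hginv _ h2] at this
    rw [Real.dist_eq, abs_lt]
    constructor <;> linarith
  -- derivative of g
  have hg' : ∀ q ∈ Set.Ioi Q₀, HasDerivAt g (Qd (g q))⁻¹ q := by
    intro q hq
    have hq' : Q₀ < q := hq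
    have hR : 0 < g q := hgpos q hq'
    exact HasDerivAt.of_local_left_inverse (hgcont q hq) (hQder _ hR)
      (hQdpos _ hR).ne'
      (Filter.eventually_of_mem (Ioi_mem_nhds hq') (fun y hy => hgQ y hy))
  -- first derivative of UF
  set D1 : ℝ → ℝ := fun q =>
    w₁ * -C / Etl + w₂ * (K * (3 * g q ^ 2 * (Qd (g q))⁻¹) + Psum / q ^ 2) with hD1def
  have hUF' : ∀ q ∈ Set.Ioi Q₀, HasDerivAt (UF w₁ w₂ Etl C n d narx S Psum g) (D1 q) q := by
    intro q hq
    have hq' : Q₀ < q := hq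
    have hq0 : 0 < q := lt_of_le_of_lt hQ₀ hq'
    have t1 : HasDerivAt (fun q : ℝ => w₁ * (Etl - C * q) / Etl) (w₁ * -C / Etl) q := by
      have h := ((((hasDerivAt_id q).const_mul C).const_sub Etl).const_mul w₁).div_const Etl
      refine h.congr_deriv ?_
      ring
    have t2 : HasDerivAt (fun q : ℝ => g q ^ 3) (3 * g q ^ 2 * (Qd (g q))⁻¹) q := by
      have h := (hg' q hq).pow 3
      refine h.congr_deriv ?_
      norm_num
    have t3 : HasDerivAt (fun q : ℝ => Psum / q) (-(Psum / q ^ 2)) q := by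
      have h := (hasDerivAt_const q Psum).div (hasDerivAt_id q) hq0.ne'
      refine h.congr_deriv ?_
      simp only [id_eq]
      ring
    have h := t1.add (((t2.const_mul K).sub t3).const_mul w₂)
    have hfun : (UF w₁ w₂ Etl C n d narx S Psum g) = fun q : ℝ =>
        w₁ * (Etl - C * q) / Etl + w₂ * (K * g q ^ 3 - Psum / q) := by
      funext x
      simp only [UF, hKdef]
    rw [hfun, hD1def]
    refine h.congr_deriv ?_
    ring
  -- second derivative of UF (as derivative of D1)
  have hD1' : ∀ q ∈ I, HasDerivAt D1
      (w₂ * (3 * K * (((Qd (g q))⁻¹) ^ 3 * g q * (2 * Qd (g q) - g q * Qdd (g q)))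
        - 2 * Psum / q ^ 3)) q := by
    intro q hq
    have hq' : Q₀ < q := hIsub hq
    have hq0 : 0 < q := lt_of_le_of_lt hQ₀ hq'
    have hR : 0 < g q := hgpos q hq'
    have hQdP : 0 < Qd (g q) := hQdpos _ hR
    -- derivative of Qd
    have hQdder : HasDerivAt Qd (Qdd (g q)) (g q) := by
      set R := g q
      have hb : HasDerivAt (fun x : ℝ => a ^ x) (a ^ R * Real.log a) R :=
        (Real.hasStrictDerivAt_const_rpow ha0 R).hasDerivAt
      have hc : HasDerivAt (fun x : ℝ => x ^ (k - 1)) ((k - 1) * R ^ (k - 1 - 1)) R :=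
        Real.hasDerivAt_rpow_const (Or.inl hR.ne')
      have hdd : HasDerivAt (fun x : ℝ => k + x * Real.log a) (1 * Real.log a) R :=
        ((hasDerivAt_id R).mul_const (Real.log a)).const_add k
      have h := ((hb.const_mul A).mul hc).mul hdd
      rw [hQdddef, hQddef]
      refine h.congr_deriv ?_
      simp only [Pi.mul_apply]
      rw [show k - 1 - 1 = k - 2 by ring]
      ring
    have hgq := hg' q hq'
    have s1 : HasDerivAt (fun q : ℝ => g q ^ 2) (2 * g q * (Qd (g q))⁻¹) q := by
      have h := hgq.pow 2
      refine h.congr_deriv ?_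
      norm_num
    have s2 : HasDerivAt (fun q : ℝ => Qd (g q)) (Qdd (g q) * (Qd (g q))⁻¹) q :=
      hQdder.comp q hgq
    have s3 : HasDerivAt (fun q : ℝ => (Qd (g q))⁻¹)
        (-(Qdd (g q) * (Qd (g q))⁻¹) / Qd (g q) ^ 2) q := s2.inv hQdP.ne'
    have s4 := (s1.const_mul 3).mul s3
    have s5 : HasDerivAt (fun q : ℝ => Psum / q ^ 2)
        ((0 * q ^ 2 - Psum * (2 * q ^ 1)) / (q ^ 2) ^ 2) q := by
      have h := (hasDerivAt_const q Psum).div (hasDerivAt_pow 2 q) (pow_ne_zero 2 hq0.ne')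
      refine h.congr_deriv ?_
      norm_num
    have h := (((s4.const_mul K).add s5).const_mul w₂).const_add (w₁ * -C / Etl)
    rw [hD1def]
    refine h.congr_deriv ?_
    field_simp
    ring
  -- sign of the second derivative value
  have hEneg : ∀ q ∈ I,
      w₂ * (3 * K * (((Qd (g q))⁻¹) ^ 3 * g q * (2 * Qd (g q) - g q * Qdd (g q)))
        - 2 * Psum / q ^ 3) < 0 := by
    intro q hq
    have hq' : Q₀ < q := hIsub hq
    have hq0 : 0 < q := lt_of_le_of_lt hQ₀ hq'
    set R := g q with hRdef
    have hR2 : 2 < R := hg2 q hq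
    have hR : 0 < R := by linarith
    have hQdP : 0 < Qd R := hQdpos _ hR
    have hx : 0 < a ^ R := Real.rpow_pos_of_pos ha0 R
    have hv : 0 < R ^ (k - 2) := Real.rpow_pos_of_pos hR _
    have hu : R ^ (k - 1) = R ^ (k - 2) * R := by
      rw [show k - 1 = (k - 2) + 1 by ring, Real.rpow_add_one hR.ne']
    have hRL : R ≤ R * Real.log a := by nlinarith
    have hBpos : 0 < k + R * Real.log a := by nlinarith
    have hfac : 0 < Real.log a * R + k - 3 := by nlinarith
    have key : 0 < (k + R * Real.log a) * (Real.log a * R + k - 3) + R * Real.log a := by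
      nlinarith [mul_pos hBpos hfac]
    have hgoal : 2 * Qd R - R * Qdd R
        = -(A * a ^ R * R ^ (k - 2) * R *
            ((k + R * Real.log a) * (Real.log a * R + k - 3) + R * Real.log a)) := by
      rw [hQddef, hQdddef]
      simp only
      rw [hu]
      ring
    have hsign : 2 * Qd R - R * Qdd R < 0 := by
      rw [hgoal]
      have pos := mul_pos (mul_pos (mul_pos (mul_pos hA hx) hv) hR) key
      linarith
    have term1 : ((Qd R)⁻¹) ^ 3 * R * (2 * Qd R - R * Qdd R) < 0 :=
      mul_neg_of_pos_of_neg (mul_pos (pow_pos (inv_pos.2 hQdP) 3) hR) hsign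
    have term2 : 0 < 2 * Psum / q ^ 3 := by positivity
    have h3K : 3 * K * (((Qd R)⁻¹) ^ 3 * R * (2 * Qd R - R * Qdd R)) < 0 :=
      mul_neg_of_pos_of_neg (by positivity) term1
    exact mul_neg_of_pos_of_neg hw₂0 (by linarith)
  -- second derivative of UF is negative on I
  have hsecond : ∀ q ∈ I, deriv (deriv (UF w₁ w₂ Etl C n d narx S Psum g)) q < 0 := by
    intro q hq
    have hev : deriv (UF w₁ w₂ Etl C n d narx S Psum g) =ᶠ[nhds q] D1 := by
      filter_upwards [Ioi_mem_nhds (hIsub hq)] with y hy using (hUF' y hy).deriv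
    rw [Filter.EventuallyEq.deriv_eq hev, (hD1' q hq).deriv]
    exact hEneg q hq
  refine ⟨?_, hsecond⟩
  apply strictConcaveOn_of_deriv2_neg' hIconv
  · intro q hq
    exact (hUF' q (hIsub hq)).differentiableAt.continuousAt.continuousWithinAt
  · intro q hq
    have : deriv^[2] (UF w₁ w₂ Etl C n d narx S Psum g) q
        = deriv (deriv (UF w₁ w₂ Etl C n d narx S Psum g)) q := by
      simp only [Function.iterate_succ, Function.iterate_zero, Function.comp_apply, id_eq,
        Function.id_comp]
    rw [this]
    exact hsecond q hq
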